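/- At every intermediate stage of the inductive construction of T(∞) (after each placement of an entry), no column of the partially constructed tableau contains a gap, that is, an empty box having a filled box above it and a filled box below it in the same column. -/

import Mathlib

open scoped Classical

/-- height of column `j` of the diagram (columns numbered from 1). -/
def hgt (c : List ℕ) (j : ℕ) : ℕ := c.getD (j - 1) 0

/-- number of boxes in the columns strictly to the left of column `j`. -/
def off (c : List ℕ) (j : ℕ) : ℕ := (c.take (j - 1)).sum

/-- `(i, j)` (row `i`, column `j`) is a box of the diagram `D`. -/
def IsBox (c : List ℕ) (i j : ℕ) : Prop :=
  1 ≤ j ∧ j ≤ c.length ∧ 1 ≤ i ∧ i ≤ hgt c j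

/-- the entry of the box `(i, j)` in the tableau `T`. -/
def Tentry (c : List ℕ) (i j : ℕ) : ℕ := off c j + i

/-- the column of the box of `D` carrying entry `m` in `T`. -/
noncomputable def colOf (c : List ℕ) (m : ℕ) : ℕ := sInf {j | m ≤ (c.take j).sum}

/-- the row of the box of `D` carrying entry `m` in `T`. -/
noncomputable def rowOf (c : List ℕ) (m : ℕ) : ℕ := m - off c (colOf c m)

/-- the total order `≼` on entries: increasing down columns, then from right to left. -/
def ple (c : List ℕ) (a b : ℕ) : Prop :=
  colOf c b < colOf c a ∨ (colOf c a = colOf c b ∧ a ≤ b)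

/-- the strict version of `≼`. -/
def plt (c : List ℕ) (a b : ℕ) : Prop :=
  colOf c b < colOf c a ∨ (colOf c a = colOf c b ∧ a < b)

/-- column `j` has a left neighbour in `D`. -/
def HasLeftNb (c : List ℕ) (j : ℕ) : Prop :=
  ∃ i, 1 ≤ i ∧ i < j ∧ hgt c i = hgt c j ∧
    ∀ i', i < i' → i' < j → hgt c i' ≠ hgt c j

/-- the `j`-th column of the tableau `T`, rows to optional entries. -/
def Tcol (c : List ℕ) (j : ℕ) : ℕ → Option ℕ := fun i =>
  if 1 ≤ i ∧ i ≤ hgt c j then some (Tentry c i j) else none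

/-- one step of the propagation rule building `T(∞)`: the entry (if any) in row `t`
of column `j - 1` of `T(∞)` (given by `prev`) is propagated into the partially
built column `j` (given by `cur`). -/
noncomputable def propStep (c : List ℕ) (j : ℕ) (prev : ℕ → Option ℕ)
    (cur : ℕ → Option ℕ) (t : ℕ) : ℕ → Option ℕ :=
  match prev t with
  | none => cur
  | some l =>
    if hgt c j = t then
      if HasLeftNb c j ∧ cur (t + 1) = none then
        Function.update cur (t + 1) (some l)
      else cur
    else
      if cur t = none then Function.update cur t (some l) else cur

/-- the `j`-th column of the composition tableau `T(∞)`. -/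
noncomputable def TinfCol (c : List ℕ) : ℕ → ℕ → Option ℕ
  | 0 => fun _ => none
  | 1 => Tcol c 1
  | j + 2 =>
      (List.range (c.sum + 2)).foldl
        (propStep c (j + 2) (TinfCol c (j + 1))) (Tcol c (j + 2))

/-- labels of lines: `1` or `∗`. -/
inductive Lab : Type
  | one : Lab
  | star : Lab
deriving DecidableEq

/-- maximal height among the columns `1, …, j - 1`. -/
def maxHgt (c : List ℕ) (j : ℕ) : ℕ := (c.take (j - 1)).foldr max 0

/-- the maximal column height of the diagram `D`. -/
def maxH (c : List ℕ) : ℕ := c.foldr max 0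

/-- `LineB c a i j lab` : the line family `ℓ(D)` contains a line labelled `lab`
whose left end-point is the box of `D` carrying entry `a` in `T` and whose right
end-point is the box `(i, j)` (row `i` of column `C_j`). -/
def LineB (c : List ℕ) (a i j : ℕ) (lab : Lab) : Prop :=
  2 ≤ j ∧ j ≤ c.length ∧ 1 ≤ i ∧
    (match lab with
     | Lab.one =>
         (maxHgt c j < hgt c j ∧ i ≤ maxHgt c j + 1 ∧ TinfCol c (j - 1) i = some a)
       ∨ (hgt c j ≤ maxHgt c j ∧ i + 1 ≤ hgt c j ∧ TinfCol c (j - 1) i = some a)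
       ∨ (hgt c j ≤ maxHgt c j ∧ i = hgt c j ∧
           ¬(∃ j', 1 ≤ j' ∧ j' < j ∧ hgt c j' = hgt c j) ∧
           TinfCol c (j - 1) i = some a)
       ∨ (hgt c j ≤ maxHgt c j ∧ i = hgt c j ∧
           (∃ j', 1 ≤ j' ∧ j' < j ∧ hgt c j' = hgt c j) ∧
           TinfCol c (j - 1) (i + 1) = some a)
     | Lab.star =>
         hgt c j ≤ maxHgt c j ∧ i = hgt c j ∧
           (∃ j', 1 ≤ j' ∧ j' < j ∧ hgt c j' = hgt c j) ∧
           TinfCol c (j - 1) i = some a)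

/-- `LineE c a b lab` : `ℓ(D)` contains a line labelled `lab` joining the box of `D`
carrying entry `a` in `T` (on the left) to the box carrying entry `b` (on the right). -/
def LineE (c : List ℕ) (a b : ℕ) (lab : Lab) : Prop :=
  ∃ i j, LineB c a i j lab ∧ b = Tentry c i j

/-- the box `(i, j)` of `D` is right extremal relative to `ℓ(D)`. -/
def RExt (c : List ℕ) (i j : ℕ) : Prop :=
  IsBox c i j ∧ ∀ i' j', ¬ LineB c (Tentry c i j) i' j' Lab.one

/-- `c` is a composition of `n`. -/
def IsComposition (c : List ℕ) (n : ℕ) : Prop :=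
  c.sum = n ∧ ∀ x ∈ c, 0 < x

lemma propStep_pers (c : List ℕ) (j t : ℕ) (prev f : ℕ → Option ℕ) (i : ℕ)
    (h : f i ≠ none) : propStep c j prev f t i ≠ none := by
  unfold propStep
  cases hp : prev t with
  | none => exact h
  | some l =>
    simp only
    split
    · split
      · rcases eq_or_ne i (t + 1) with rfl | hne
        · simp [Function.update_self]
        · rwa [Function.update_of_ne hne]
      · exact h
    · split
      · rcases eq_or_ne i t with rfl | hne
        · simp [Function.update_self]
        · rwa [Function.update_of_ne hne]
      · exact h

lemma fold_inv (c : List ℕ) (j : ℕ) (prev : ℕ → Option ℕ)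
    (hp0 : prev 0 = none)
    (hp1 : ∀ i, 1 ≤ i → prev i = none → prev (i + 1) = none) :
    ∀ m,
      ((List.range m).foldl (propStep c j prev) (Tcol c j)) 0 = none ∧
      (∀ i, 1 ≤ i → ((List.range m).foldl (propStep c j prev) (Tcol c j)) i = none →
        ((List.range m).foldl (propStep c j prev) (Tcol c j)) (i + 1) = none) ∧
      (∀ i, 1 ≤ i → i ≤ hgt c j →
        ((List.range m).foldl (propStep c j prev) (Tcol c j)) i ≠ none) ∧
      (∀ t, 1 ≤ t → t < m → prev t ≠ none →
        ((List.range m).foldl (propStep c j prev) (Tcol c j)) t ≠ none) := by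
  intro m
  induction m with
  | zero =>
    simp only [List.range_zero, List.foldl_nil]
    refine ⟨by simp [Tcol], ?_, ?_, by omega⟩
    · intro i hi hnone
      simp only [Tcol] at hnone ⊢
      split at hnone
      · exact absurd hnone (by simp)
      · rename_i hcond
        have : ¬(1 ≤ i + 1 ∧ i + 1 ≤ hgt c j) := by omega
        rw [if_neg this]
    · intro i hi hih
      simp [Tcol, hi, hih]
  | succ m ih =>
    obtain ⟨ih0, ih1, ih3, ih4⟩ := ih
    set f := (List.range m).foldl (propStep c j prev) (Tcol c j) with hf
    have hstep : (List.range (m + 1)).foldl (propStep c j prev) (Tcol c j)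
        = propStep c j prev f m := by
      rw [List.range_succ, List.foldl_append, List.foldl_cons, List.foldl_nil]
    rw [hstep]
    -- a general persistence consequence
    have pers : ∀ i, f i ≠ none → propStep c j prev f m i ≠ none :=
      fun i h => propStep_pers c j m prev f i h
    unfold propStep
    cases hp : prev m with
    | none =>
      simp only
      refine ⟨ih0, ih1, ih3, ?_⟩
      intro t ht htm hpt
      rcases Nat.lt_succ_iff_lt_or_eq.mp htm with h | rfl
      · exact ih4 t ht h hpt
      · exact absurd hp hpt
    | some l =>
      have hm1 : 1 ≤ m := by
        by_contra h
        have : m = 0 := by omega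
        rw [this, hp0] at hp; cases hp
      simp only
      split
      · rename_i hhgt
        -- hgt c j = m
        have hfm : f m ≠ none := ih3 m (by omega) (by omega)
        split
        · rename_i hcond
          obtain ⟨-, hfm1⟩ := hcond
          refine ⟨?_, ?_, ?_, ?_⟩
          · rw [Function.update_of_ne (by omega)]; exact ih0
          · intro i hi hnone
            have hine : i ≠ m + 1 := by
              intro h; rw [h, Function.update_self] at hnone
              cases hnone
            rw [Function.update_of_ne hine] at hnone
            have hine2 : i + 1 ≠ m + 1 := by
              intro h
              have : i = m := by omega
              exact hfm (this ▸ hnone)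
            rw [Function.update_of_ne hine2]
            exact ih1 i hi hnone
          · intro i hi hih
            rcases eq_or_ne i (m + 1) with rfl | hne
            · simp [Function.update_self]
            · rw [Function.update_of_ne hne]; exact ih3 i hi hih
          · intro t ht htm hpt
            rcases Nat.lt_succ_iff_lt_or_eq.mp htm with h | rfl
            · rcases eq_or_ne t (m + 1) with rfl | hne
              · simp [Function.update_self]
              · rw [Function.update_of_ne hne]; exact ih4 t ht h hpt
            · rw [Function.update_of_ne (by omega)]; exact hfm
        · refine ⟨ih0, ih1, ih3, ?_⟩
          intro t ht htm hpt
          rcases Nat.lt_succ_iff_lt_or_eq.mp htm with h | rfl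
          · exact ih4 t ht h hpt
          · exact hfm
      · rename_i hhgt
        split
        · rename_i hfm
          refine ⟨?_, ?_, ?_, ?_⟩
          · rw [Function.update_of_ne (by omega)]; exact ih0
          · intro i hi hnone
            have hine : i ≠ m := by
              intro h; rw [h, Function.update_self] at hnone
              cases hnone
            rw [Function.update_of_ne hine] at hnone
            have hine2 : i + 1 ≠ m := by
              intro h
              -- i = m - 1, m ≥ 2
              have hm2 : 2 ≤ m := by omega
              have hpm1 : prev i ≠ none := by
                intro hc'
                have := hp1 i hi hc'
                rw [h] at this
                rw [this] at hp; cases hp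
              have := ih4 i hi (by omega) hpm1
              exact this hnone
            rw [Function.update_of_ne hine2]
            exact ih1 i hi hnone
          · intro i hi hih
            rcases eq_or_ne i m with rfl | hne
            · simp [Function.update_self]
            · rw [Function.update_of_ne hne]; exact ih3 i hi hih
          · intro t ht htm hpt
            rcases Nat.lt_succ_iff_lt_or_eq.mp htm with h | rfl
            · rcases eq_or_ne t m with rfl | hne
              · simp [Function.update_self]
              · rw [Function.update_of_ne hne]; exact ih4 t ht h hpt
            · simp [Function.update_self]
        · rename_i hfm
          refine ⟨ih0, ih1, ih3, ?_⟩
          intro t ht htm hpt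
          rcases Nat.lt_succ_iff_lt_or_eq.mp htm with h | rfl
          · exact ih4 t ht h hpt
          · exact hfm

lemma pre_TinfCol (c : List ℕ) : ∀ j, TinfCol c j 0 = none ∧
    ∀ i, 1 ≤ i → TinfCol c j i = none → TinfCol c j (i + 1) = none := by
  intro j
  induction j using Nat.strong_induction_on with
  | _ j ih =>
    match j with
    | 0 => exact ⟨rfl, fun i _ _ => rfl⟩
    | 1 =>
      show Tcol c 1 0 = none ∧ _
      refine ⟨by simp [Tcol], ?_⟩
      intro i hi hnone
      simp only [TinfCol, Tcol] at hnone ⊢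
      split at hnone
      · exact absurd hnone (by simp)
      · have : ¬(1 ≤ i + 1 ∧ i + 1 ≤ hgt c 1) := by omega
        simp [this]
        omega
    | (j + 2) =>
      obtain ⟨h0, h1⟩ := ih (j + 1) (by omega)
      have := fold_inv c (j + 2) (TinfCol c (j + 1)) h0 h1 (c.sum + 2)
      exact ⟨this.1, this.2.1⟩

/-- at every intermediate stage of the inductive construction of `T(∞)`
(i.e. after any number `m` of steps of the propagation filling in a column `j`),
no column of the partially constructed tableau contains a gap: an empty box with a
filled box above it and a filled box below it in the same column. -/
theorem statement1 (n : ℕ) (hn : 0 < n) (c : List ℕ) (hc : IsComposition c n) :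
    ∀ j m i, 2 ≤ j → j ≤ c.length → 1 ≤ i →
      ((List.range m).foldl (propStep c j (TinfCol c (j - 1))) (Tcol c j)) i = none →
      ((List.range m).foldl (propStep c j (TinfCol c (j - 1))) (Tcol c j)) (i + 1) = none := by
  intro j m i _ _ hi hnone
  obtain ⟨h0, h1⟩ := pre_TinfCol c (j - 1)
  exact (fold_inv c j (TinfCol c (j - 1)) h0 h1 m).2.1 i hi hnone
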